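/- Let (P, ≤) be a finite partially ordered set, f : P → [0,∞), and let V(f) := { y ∈ P : there exists x ∈ P with x ≤ y and f(x) < f(y) } be the set of points where f violates antitonicity. Suppose V(f) is nonempty and let y₀ be a minimal element of V(f). Let g be the greatest antitone function on the subposet U_{y₀} = {x ∈ P : y₀ ≤ x} satisfying g(x) ≤ f(x) for all x ∈ U_{y₀}. Then the residual f′ := f − 1_{U_{y₀}}·g is nonnegative, f′(y₀) = 0, and V(f′) ⊆ V(f) \ {y₀}; in particular, #V(f′) < #V(f). -/

import Mathlib

/-- The principal upper set `U_y = {x | y ≤ x}`. -/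
def upSet {P : Type*} [PartialOrder P] (y : P) : Set P := {x | y ≤ x}

/-- The set of points where `f` violates antitonicity. -/
def violations {P : Type*} [PartialOrder P] (f : P → ℝ) : Set P :=
  {y | ∃ x, x ≤ y ∧ f x < f y}

/-- subtracting the greatest antitone minorant of `f` on the
principal upper set of a minimal violation `y₀` yields a nonnegative residual
vanishing at `y₀` with strictly fewer violations of antitonicity. -/
theorem stmt_6 {P : Type*} [PartialOrder P] [Fintype P]
    (f : P → ℝ) (hf : ∀ x, 0 ≤ f x)
    (y₀ : P) (hy₀ : y₀ ∈ violations f)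
    (hy₀min : ∀ y ∈ violations f, y ≤ y₀ → y = y₀)
    (g : P → ℝ)
    (hgA : ∀ x ∈ upSet y₀, ∀ z ∈ upSet y₀, x ≤ z → g z ≤ g x)
    (hg0 : ∀ x ∈ upSet y₀, 0 ≤ g x)
    (hgf : ∀ x ∈ upSet y₀, g x ≤ f x)
    (hgmax : ∀ h : P → ℝ,
      (∀ x ∈ upSet y₀, ∀ z ∈ upSet y₀, x ≤ z → h z ≤ h x) →
      (∀ x ∈ upSet y₀, 0 ≤ h x) → (∀ x ∈ upSet y₀, h x ≤ f x) →
      ∀ x ∈ upSet y₀, h x ≤ g x)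
    (f' : P → ℝ) (hf' : ∀ x, f' x = f x - (upSet y₀).indicator g x) :
    (∀ x, 0 ≤ f' x) ∧ f' y₀ = 0 ∧
    violations f' ⊆ violations f \ {y₀} ∧
    (violations f').ncard < (violations f).ncard := by
  classical
  -- the explicit greatest antitone minorant candidate
  set s : P → Finset P := fun x => Finset.univ.filter (fun z => y₀ ≤ z ∧ z ≤ x) with hs
  have hmem : ∀ x z, z ∈ s x ↔ (y₀ ≤ z ∧ z ≤ x) := by
    intro x z; simp [hs]
  have hsne : ∀ x, y₀ ≤ x → (s x).Nonempty := fun x hx => ⟨y₀, (hmem x y₀).2 ⟨le_rfl, hx⟩⟩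
  set h : P → ℝ := fun x => if hx : y₀ ≤ x then (s x).inf' (hsne x hx) f else 0 with hh
  have hval : ∀ x (hx : y₀ ≤ x), h x = (s x).inf' (hsne x hx) f := by
    intro x hx; simp [hh, hx]
  have hhA : ∀ x ∈ upSet y₀, ∀ z ∈ upSet y₀, x ≤ z → h z ≤ h x := by
    intro x hx z hz hxz
    rw [hval x hx, hval z hz]
    obtain ⟨b, hb, hbe⟩ := Finset.exists_mem_eq_inf' (hsne x hx) f
    rw [hbe]
    exact Finset.inf'_le f ((hmem z b).2 ⟨((hmem x b).1 hb).1, le_trans ((hmem x b).1 hb).2 hxz⟩)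
  have hh0 : ∀ x ∈ upSet y₀, 0 ≤ h x := by
    intro x hx
    rw [hval x hx]
    exact Finset.le_inf' _ _ (fun b _ => hf b)
  have hhf : ∀ x ∈ upSet y₀, h x ≤ f x := by
    intro x hx
    rw [hval x hx]
    exact Finset.inf'_le f ((hmem x x).2 ⟨hx, le_rfl⟩)
  have hhy₀ : h y₀ = f y₀ := by
    rw [hval y₀ le_rfl]
    refine le_antisymm (Finset.inf'_le f ((hmem y₀ y₀).2 ⟨le_rfl, le_rfl⟩)) ?_
    refine Finset.le_inf' _ _ (fun b hb => ?_)
    obtain ⟨h1, h2⟩ := (hmem y₀ b).1 hb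
    rw [le_antisymm h2 h1]
  have hhg := hgmax h hhA hh0 hhf
  -- key: if y ≥ y₀ is not a violation of f, then g y = f y
  have key : ∀ y, y₀ ≤ y → y ∉ violations f → g y = f y := by
    intro y hy hyv
    refine le_antisymm (hgf y hy) ?_
    have hfh : f y ≤ h y := by
      rw [hval y hy]
      refine Finset.le_inf' _ _ (fun b hb => ?_)
      by_contra hc
      exact hyv ⟨b, ((hmem y b).1 hb).2, lt_of_not_ge hc⟩
    exact le_trans hfh (hhg y hy)
  have hgy₀ : g y₀ = f y₀ :=
    le_antisymm (hgf y₀ le_rfl) (hhy₀ ▸ hhg y₀ le_rfl)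
  -- values of f'
  have hin : ∀ x, y₀ ≤ x → f' x = f x - g x := by
    intro x hx; rw [hf' x, Set.indicator_of_mem (show x ∈ upSet y₀ from hx) g]
  have hout : ∀ x, ¬ y₀ ≤ x → f' x = f x := by
    intro x hx; rw [hf' x, Set.indicator_of_notMem (show x ∉ upSet y₀ from hx) g, sub_zero]
  -- nonnegativity
  have hpos : ∀ x, 0 ≤ f' x := by
    intro x
    by_cases hx : y₀ ≤ x
    · rw [hin x hx]; exact sub_nonneg.2 (hgf x hx)
    · rw [hout x hx]; exact hf x
  have hzero : f' y₀ = 0 := by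
    rw [hin y₀ le_rfl, hgy₀, sub_self]
  -- violations of f' are violations of f, excluding y₀
  have hsub : violations f' ⊆ violations f \ {y₀} := by
    rintro y ⟨x, hxy, hlt⟩
    have hynot : y ≠ y₀ := by
      rintro rfl
      rw [hzero] at hlt
      exact absurd hlt (not_lt.2 (hpos x))
    refine ⟨?_, hynot⟩
    by_cases hy : y₀ ≤ y
    · by_contra hyv
      have := key y hy hyv
      rw [hin y hy, this, sub_self] at hlt
      exact absurd hlt (not_lt.2 (hpos x))
    · have hx : ¬ y₀ ≤ x := fun hx => hy (le_trans hx hxy)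
      rw [hout x hx, hout y hy] at hlt
      exact ⟨x, hxy, hlt⟩
  refine ⟨hpos, hzero, hsub, ?_⟩
  have hfin : (violations f).Finite := Set.toFinite _
  calc (violations f').ncard ≤ (violations f \ {y₀}).ncard :=
        Set.ncard_le_ncard hsub hfin.diff
    _ < (violations f).ncard := Set.ncard_diff_singleton_lt_of_mem hy₀ hfin
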